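/- Let β ∈ ℝ and let x : ℕ → ℝ be summable with 0 ≤ x_i ≤ 1 for all i and ∑'_i x_i ≤ 1. For real s ≥ 1 write φ_s(x) := ∑'_i x_i^s (with 0^s := 0). Then, as the real parameter m tends to 2 from the right, the quantity 2 − 2(1+β)·φ_2(x) − m(m−1)·φ_{m−1}(x) + m(m−1+β)·φ_m(x) converges to 2·(1 − ∑'_i x_i). -/

import Mathlib

/-- The power sum with real exponent: `φ_s(x) = ∑'_i x_i^s` (real power, `0^s = 0`
for `s > 0`). -/
noncomputable def phiR (s : ℝ) (x : ℕ → ℝ) : ℝ := ∑' i, x i ^ s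

open Filter Real Topology

lemma phiR_tendsto (x : ℕ → ℝ) (hsum : Summable x) (hx0 : ∀ i, 0 ≤ x i)
    (hx1 : ∀ i, x i ≤ 1) {s₀ : ℝ} (hs₀ : 1 ≤ s₀) :
    Tendsto (fun s : ℝ => phiR s x) (nhdsWithin s₀ (Set.Ici 1))
      (nhds (∑' i, x i ^ s₀)) := by
  apply tendsto_tsum_of_dominated_convergence (bound := x) hsum
  · intro k
    exact (Real.continuousAt_const_rpow' (by linarith : s₀ ≠ 0)).tendsto.mono_left
      nhdsWithin_le_nhds
  · filter_upwards [self_mem_nhdsWithin] with s hs k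
    have hs' : (1:ℝ) ≤ s := hs
    rcases eq_or_lt_of_le (hx0 k) with h | h
    · rw [← h, Real.zero_rpow (by linarith : s ≠ 0)]
      simp
    · rw [Real.norm_eq_abs, abs_of_nonneg (Real.rpow_nonneg (hx0 k) s)]
      calc x k ^ s ≤ x k ^ (1:ℝ) :=
            Real.rpow_le_rpow_of_exponent_ge h (hx1 k) hs'
        _ = x k := Real.rpow_one _

/-- for `x` in the Kingman simplex, as `m ↓ 2`,
`𝒜_{1,β}(φ₂ − φ_m)(x) = 2 − 2(1+β)φ₂(x) − m(m−1)φ_{m−1}(x) + m(m−1+β)φ_m(x)`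
converges to `2·(1 − ∑'_i x_i)`. -/
theorem generator_phi2_sub_phim_limit (β : ℝ) (x : ℕ → ℝ) (hsum : Summable x)
    (hx0 : ∀ i, 0 ≤ x i) (hx1 : ∀ i, x i ≤ 1) (htot : (∑' i, x i) ≤ 1) :
    Filter.Tendsto
      (fun m : ℝ =>
        2 - 2 * (1 + β) * phiR 2 x - m * (m - 1) * phiR (m - 1) x
          + m * (m - 1 + β) * phiR m x)
      (nhdsWithin 2 (Set.Ioi 2)) (nhds (2 * (1 - ∑' i, x i))) := by
  have hid : Tendsto (fun m : ℝ => m) (nhdsWithin 2 (Set.Ioi 2)) (nhds 2) :=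
    tendsto_id.mono_left nhdsWithin_le_nhds
  have hmap1 : Tendsto (fun m : ℝ => m - 1) (nhdsWithin 2 (Set.Ioi 2))
      (nhdsWithin 1 (Set.Ici 1)) := by
    apply tendsto_nhdsWithin_of_tendsto_nhds_of_eventually_within
    · have h := hid.sub (tendsto_const_nhds (x := (1:ℝ))); norm_num at h; exact h
    · filter_upwards [self_mem_nhdsWithin] with m hm
      have : (2:ℝ) < m := hm
      simp only [Set.mem_Ici]; linarith
  have hmap2 : Tendsto (fun m : ℝ => m) (nhdsWithin 2 (Set.Ioi 2))
      (nhdsWithin 2 (Set.Ici 1)) := by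
    apply tendsto_nhdsWithin_of_tendsto_nhds_of_eventually_within
    · exact hid
    · filter_upwards [self_mem_nhdsWithin] with m hm
      have : (2:ℝ) < m := hm
      simp only [Set.mem_Ici]; linarith
  have h1 : Tendsto (fun m : ℝ => phiR (m - 1) x) (nhdsWithin 2 (Set.Ioi 2))
      (nhds (∑' i, x i)) := by
    have := (phiR_tendsto x hsum hx0 hx1 le_rfl).comp hmap1
    simpa [Real.rpow_one, Function.comp_def] using this
  have h2 : Tendsto (fun m : ℝ => phiR m x) (nhdsWithin 2 (Set.Ioi 2))
      (nhds (phiR 2 x)) :=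
    (phiR_tendsto x hsum hx0 hx1 (by norm_num)).comp hmap2
  have key : Tendsto
      (fun m : ℝ =>
        2 - 2 * (1 + β) * phiR 2 x - m * (m - 1) * phiR (m - 1) x
          + m * (m - 1 + β) * phiR m x)
      (nhdsWithin 2 (Set.Ioi 2))
      (nhds (2 - 2 * (1 + β) * phiR 2 x - 2 * (2 - 1) * (∑' i, x i)
          + 2 * (2 - 1 + β) * phiR 2 x)) :=
    ((tendsto_const_nhds.sub
      ((hid.mul (hid.sub tendsto_const_nhds)).mul h1)).add
      ((hid.mul ((hid.sub tendsto_const_nhds).add tendsto_const_nhds)).mul h2))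
  convert key using 2
  ring
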